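/- Let A be a real n×n matrix, B a real n×m matrix, Θ a real antisymmetric n×n matrix, and J a real antisymmetric m×m matrix, such that A Θ + Θ Aᵀ + B J Bᵀ = 0. If A is Hurwitz (all eigenvalues have negative real part) and P := ∫₀^∞ e^{tA} B Bᵀ e^{tAᵀ} dt, then the complex Hermitian matrix P + iΘ is positive semi-definite, provided I_m + iJ is positive semi-definite. -/

import Mathlib

open Matrix MeasureTheory
open scoped ComplexOrder

noncomputable def mexp {n : ℕ} (A : Matrix (Fin n) (Fin n) ℝ) : Matrix (Fin n) (Fin n) ℝ :=
  NormedSpace.exp A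

def Hurwitz {n : ℕ} (A : Matrix (Fin n) (Fin n) ℝ) : Prop :=
  ∀ μ ∈ spectrum ℂ (A.map Complex.ofReal), μ.re < 0

open NormedSpace

attribute [local instance] Matrix.linftyOpNormedAddCommGroup Matrix.linftyOpNormedRing
  Matrix.linftyOpNormedAlgebra

lemma mexp_map {n : ℕ} (M : Matrix (Fin n) (Fin n) ℝ) :
    (mexp M).map Complex.ofReal = NormedSpace.exp (M.map Complex.ofReal) := by
  have hc : Continuous (fun N : Matrix (Fin n) (Fin n) ℝ =>
      (Complex.ofRealHom.mapMatrix : Matrix (Fin n) (Fin n) ℝ →+* Matrix (Fin n) (Fin n) ℂ) N) := by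
    apply continuous_pi; intro i; apply continuous_pi; intro j
    exact Complex.continuous_ofReal.comp ((continuous_apply j).comp (continuous_apply i))
  have h := map_exp (Complex.ofRealHom.mapMatrix :
      Matrix (Fin n) (Fin n) ℝ →+* Matrix (Fin n) (Fin n) ℂ) hc M
  rw [mexp]
  exact h

lemma entry_norm_le {n m : ℕ} (M : Matrix (Fin n) (Fin m) ℂ) (i : Fin n) (j : Fin m) :
    ‖M i j‖ ≤ ‖M‖ := by
  rw [Matrix.linfty_opNorm_def]
  have h1 : ‖M i j‖₊ ≤ ∑ j', ‖M i j'‖₊ :=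
    Finset.single_le_sum (f := fun j' => ‖M i j'‖₊) (fun _ _ => zero_le) (Finset.mem_univ j)
  have h2 : (∑ j', ‖M i j'‖₊) ≤ Finset.univ.sup fun i => ∑ j', ‖M i j'‖₊ :=
    Finset.le_sup (f := fun i => ∑ j', ‖M i j'‖₊) (Finset.mem_univ i)
  exact_mod_cast h1.trans h2

lemma exp_mulVec_eigenvector {n : ℕ} (M : Matrix (Fin n) (Fin n) ℂ) {μ : ℂ} {v : Fin n → ℂ}
    (h : M *ᵥ v = μ • v) : NormedSpace.exp M *ᵥ v = Complex.exp μ • v := by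
  have hpow : ∀ k : ℕ, (M ^ k) *ᵥ v = (μ ^ k) • v := by
    intro k
    induction k with
    | zero => simp
    | succ k ih =>
      rw [pow_succ', ← Matrix.mulVec_mulVec, ih, Matrix.mulVec_smul, h, smul_smul, ← pow_succ]
  have hL : ∃ L : Matrix (Fin n) (Fin n) ℂ →L[ℂ] (Fin n → ℂ), ∀ N, L N = N *ᵥ v := by
    refine ⟨LinearMap.toContinuousLinearMap
      { toFun := fun N => N *ᵥ v
        map_add' := fun X Y => Matrix.add_mulVec X Y v
        map_smul' := fun c X => Matrix.smul_mulVec c X v }, fun N => rfl⟩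
  obtain ⟨L, hLa⟩ := hL
  have hs : Summable fun k : ℕ => (k.factorial⁻¹ : ℂ) • M ^ k := expSeries_summable' M
  rw [exp_eq_tsum ℂ, ← hLa, L.map_tsum hs]
  have : ∀ k : ℕ, L ((k.factorial⁻¹ : ℂ) • M ^ k) = ((k.factorial⁻¹ : ℂ) • μ ^ k) • v := by
    intro k
    rw [L.map_smul, hLa, hpow k, smul_smul, smul_eq_mul]
  rw [tsum_congr this, (expSeries_summable' (𝕂 := ℂ) μ).tsum_smul_const]
  congr 1
  rw [Complex.exp_eq_exp_ℂ, exp_eq_tsum ℂ]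

lemma spectrum_exp_subset {n : ℕ} (M : Matrix (Fin n) (Fin n) ℂ) :
    ∀ z ∈ spectrum ℂ (NormedSpace.exp M), ∃ μ ∈ spectrum ℂ M, z = Complex.exp μ := by
  intro z hz
  have hspec : ∀ (N : Matrix (Fin n) (Fin n) ℂ), spectrum ℂ N = spectrum ℂ (Matrix.toLin' N) := by
    intro N
    rw [← AlgEquiv.spectrum_eq (Matrix.toLinAlgEquiv' (R := ℂ) (n := Fin n)) N]
    rfl
  rw [hspec] at hz
  have hz' : Module.End.HasEigenvalue (Matrix.toLin' (NormedSpace.exp M)) z :=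
    Module.End.hasEigenvalue_iff_mem_spectrum.mpr hz
  set W := Module.End.eigenspace (Matrix.toLin' (NormedSpace.exp M)) z with hWdef
  have hW : W ≠ ⊥ := hz'
  have hcomm : NormedSpace.exp M * M = M * NormedSpace.exp M :=
    ((Commute.refl M).exp_left)
  have hinv : ∀ x ∈ W, (Matrix.toLin' M) x ∈ W := by
    intro x hx
    rw [hWdef, Module.End.mem_eigenspace_iff] at hx ⊢
    rw [Matrix.toLin'_apply] at hx ⊢
    rw [Matrix.toLin'_apply, Matrix.mulVec_mulVec, hcomm, ← Matrix.mulVec_mulVec, hx,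
      Matrix.mulVec_smul]
  haveI : Nontrivial W := Submodule.nontrivial_iff_ne_bot.mpr hW
  set g := (Matrix.toLin' M).restrict hinv with hgdef
  obtain ⟨μ, hμ⟩ := Module.End.exists_eigenvalue g
  obtain ⟨w, hw⟩ := hμ.exists_hasEigenvector
  have hv : M *ᵥ (w : Fin n → ℂ) = μ • (w : Fin n → ℂ) := by
    have := hw.apply_eq_smul
    have h2 : ((g w : W) : Fin n → ℂ) = μ • (w : Fin n → ℂ) := by rw [this]; rfl
    rw [hgdef, LinearMap.restrict_coe_apply, Matrix.toLin'_apply] at h2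
    exact h2
  have hv0 : (w : Fin n → ℂ) ≠ 0 := by
    intro hcon
    exact hw.right (Subtype.coe_injective (by simpa using hcon))
  refine ⟨μ, ?_, ?_⟩
  · rw [hspec]
    exact Module.End.hasEigenvalue_iff_mem_spectrum.mp
      (Module.End.hasEigenvalue_of_hasEigenvector
        ⟨Module.End.mem_eigenspace_iff.mpr (by rw [Matrix.toLin'_apply, hv]), hv0⟩)
  · have h1 : NormedSpace.exp M *ᵥ (w : Fin n → ℂ) = Complex.exp μ • (w : Fin n → ℂ) :=
      exp_mulVec_eigenvector M hv
    have h2 : NormedSpace.exp M *ᵥ (w : Fin n → ℂ) = z • (w : Fin n → ℂ) := by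
      have h3 := Module.End.mem_eigenspace_iff.mp w.2
      rw [Matrix.toLin'_apply] at h3
      exact h3
    obtain ⟨i, hi⟩ := Function.ne_iff.mp hv0
    have := congrFun (h1.symm.trans h2) i
    simp only [Pi.smul_apply, smul_eq_mul, Pi.zero_apply] at this hi
    exact (mul_right_cancel₀ hi this).symm

lemma hurwitz_decay {n : ℕ} (A : Matrix (Fin n) (Fin n) ℝ)
    (hA : ∀ μ ∈ spectrum ℂ (A.map Complex.ofReal), μ.re < 0) :
    ∃ C ε : ℝ, 0 < C ∧ 0 < ε ∧ ∀ t : ℝ, 0 ≤ t →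
      ‖NormedSpace.exp (t • A.map Complex.ofReal)‖ ≤ C * Real.exp (-ε * t) := by
  set Ac := A.map Complex.ofReal with hAc
  set E := NormedSpace.exp Ac with hE
  rcases Nat.eq_zero_or_pos n with hn | hn
  · refine ⟨1, 1, one_pos, one_pos, fun t ht => ?_⟩
    subst hn
    have : NormedSpace.exp (t • Ac) = 0 := Subsingleton.elim _ _
    rw [this, norm_zero]
    positivity
  · haveI : NeZero n := ⟨hn.ne'⟩
    haveI : Nonempty (Fin n) := ⟨⟨0, hn⟩⟩
    haveI : Nontrivial (Matrix (Fin n) (Fin n) ℂ) := inferInstance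
    -- spectral radius of E is < 1
    have hρ : spectralRadius ℂ E < 1 := by
      have h1 : ((1 : NNReal) : ENNReal) = 1 := by simp
      rw [← h1]
      apply spectrum.spectralRadius_lt_of_forall_lt
      intro z hz
      obtain ⟨μ, hμ, rfl⟩ := spectrum_exp_subset Ac z hz
      have : ‖Complex.exp μ‖ < 1 := by
        rw [Complex.norm_exp]
        exact Real.exp_lt_one_iff.mpr (hA μ hμ)
      exact_mod_cast this
    -- Gelfand: find k with ‖E^k‖ < 1
    have htend := spectrum.pow_norm_pow_one_div_tendsto_nhds_spectralRadius E
    have hev : ∀ᶠ k : ℕ in Filter.atTop,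
        ENNReal.ofReal (‖E ^ k‖ ^ (1 / k : ℝ)) < 1 :=
      htend.eventually_lt_const hρ
    obtain ⟨k, hEk', hk1⟩ := (hev.and (Filter.eventually_ge_atTop 1)).exists
    have hk0 : (0:ℝ) < k := by exact_mod_cast hk1
    have hEk : ‖E ^ k‖ < 1 := by
      have h2 : ‖E ^ k‖ ^ (1 / k : ℝ) < 1 := by
        have := ENNReal.ofReal_lt_one.mp hEk'
        exact lt_of_le_of_lt (le_of_eq rfl) this
      by_contra hcon
      push_neg at hcon
      have : (1:ℝ) ≤ ‖E ^ k‖ ^ (1 / k : ℝ) :=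
        Real.one_le_rpow hcon (by positivity)
      linarith
    set s := max ‖E ^ k‖ (1/2 : ℝ) with hs
    have hs0 : (0:ℝ) < s := lt_max_of_lt_right (by norm_num)
    have hs1 : s < 1 := max_lt hEk (by norm_num)
    have hsk : ‖E ^ k‖ ≤ s := le_max_left _ _
    have hlogs : Real.log s < 0 := Real.log_neg hs0 hs1
    set ε := -Real.log s / k with hε
    have hεpos : 0 < ε := div_pos (neg_pos.mpr hlogs) hk0
    -- bound on compact piece
    obtain ⟨M, hM⟩ := (isCompact_Icc (a := (0:ℝ)) (b := k)).exists_bound_of_continuousOn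
      (f := fun r : ℝ => NormedSpace.exp (r • Ac))
      ((exp_continuous.comp (continuous_id.smul continuous_const)).continuousOn)
    set M' := max M 1 with hM'
    have hM'1 : (1:ℝ) ≤ M' := le_max_right _ _
    have hM'0 : (0:ℝ) < M' := lt_of_lt_of_le one_pos hM'1
    refine ⟨M' / s, ε, div_pos hM'0 hs0, hεpos, fun t ht => ?_⟩
    set q := ⌊t / k⌋₊ with hq
    have hq1 : (q : ℝ) * k ≤ t := by
      have := Nat.floor_le (div_nonneg ht hk0.le)
      calc (q:ℝ) * k ≤ (t/k) * k := by nlinarith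
        _ = t := by field_simp
    have hq2 : t < ((q : ℝ) + 1) * k := by
      have := Nat.lt_floor_add_one (t / k)
      calc t = (t/k) * k := by field_simp
        _ < ((q:ℝ)+1) * k := by nlinarith
    set r := t - (q:ℝ) * k with hr
    have hr0 : 0 ≤ r := by simp [hr]; linarith
    have hrk : r ≤ k := by simp [hr]; nlinarith
    -- splitting
    have hEkexp : NormedSpace.exp ((k:ℝ) • Ac) = E ^ k := by
      rw [hE, ← Matrix.exp_nsmul, Nat.cast_smul_eq_nsmul]
    have hsplit : NormedSpace.exp (t • Ac) = (E ^ k) ^ q * NormedSpace.exp (r • Ac) := by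
      have h1 : t • Ac = ((q:ℝ) * k) • Ac + r • Ac := by
        rw [← add_smul]; congr 1; simp [hr]
      have h2 : ((q:ℝ) * k) • Ac = q • ((k:ℝ) • Ac) := by
        rw [← Nat.cast_smul_eq_nsmul ℝ, smul_smul]
      rw [h1, Matrix.exp_add_of_commute _ _
        (((Commute.refl Ac).smul_left ((q:ℝ) * k)).smul_right r), h2,
        Matrix.exp_nsmul, hEkexp]
    -- norm bounds
    have key : ∀ p : ℕ, ∀ y : Matrix (Fin n) (Fin n) ℂ, ‖(E ^ k) ^ p * y‖ ≤ s ^ p * ‖y‖ := by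
      intro p
      induction p with
      | zero => intro y; simp
      | succ p ih =>
        intro y
        calc ‖(E ^ k) ^ (p+1) * y‖ = ‖(E ^ k) ^ p * (E ^ k * y)‖ := by
              rw [pow_succ, mul_assoc]
          _ ≤ s ^ p * ‖E ^ k * y‖ := ih _
          _ ≤ s ^ p * (‖E ^ k‖ * ‖y‖) := by
              apply mul_le_mul_of_nonneg_left (norm_mul_le _ _) (by positivity)
          _ ≤ s ^ p * (s * ‖y‖) := by
              apply mul_le_mul_of_nonneg_left
                (mul_le_mul_of_nonneg_right hsk (norm_nonneg _)) (by positivity)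
          _ = s ^ (p+1) * ‖y‖ := by ring
    have hMr : ‖NormedSpace.exp (r • Ac)‖ ≤ M' :=
      le_trans (hM r ⟨hr0, hrk⟩) (le_max_left _ _)
    have hbound : ‖NormedSpace.exp (t • Ac)‖ ≤ s ^ q * M' := by
      rw [hsplit]
      exact le_trans (key q _) (mul_le_mul_of_nonneg_left hMr (by positivity))
    -- s^q ≤ exp(-ε t)/s
    have hsq : s ^ q ≤ Real.exp (-ε * t) / s := by
      have h1 : (s:ℝ) ^ q = Real.exp (Real.log s * q) := by
        rw [mul_comm (Real.log s), ← Real.log_pow, Real.exp_log (by positivity)]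
      have h2 : Real.log s * q ≤ Real.log s * (t / k - 1) := by
        have hq3 : t / k - 1 ≤ (q:ℝ) := by
          have h4 : t / k < (q:ℝ) + 1 := by rw [div_lt_iff₀ hk0]; nlinarith
          linarith
        nlinarith [hq3, hlogs]
      have h3 : Real.log s * (t / k - 1) = -ε * t - Real.log s := by
        rw [hε]
        field_simp
      rw [h1]
      calc Real.exp (Real.log s * q) ≤ Real.exp (-ε * t - Real.log s) := by
            apply Real.exp_le_exp.mpr; rw [← h3]; exact h2
        _ = Real.exp (-ε * t) / s := by
            rw [Real.exp_sub, Real.exp_log hs0]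
    calc ‖NormedSpace.exp (t • Ac)‖ ≤ s ^ q * M' := hbound
      _ ≤ (Real.exp (-ε * t) / s) * M' := mul_le_mul_of_nonneg_right hsq hM'0.le
      _ = M' / s * Real.exp (-ε * t) := by ring

lemma map_smul_ofReal {n : ℕ} (A : Matrix (Fin n) (Fin n) ℝ) (t : ℝ) :
    ((t • A).map Complex.ofReal) = t • (A.map Complex.ofReal) := by
  ext i j
  simp [Matrix.map_apply, Complex.ofReal_mul, Complex.real_smul]

lemma mexp_transpose {n : ℕ} (A : Matrix (Fin n) (Fin n) ℝ) (t : ℝ) :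
    mexp (t • Aᵀ) = (mexp (t • A))ᵀ := by
  rw [mexp, mexp, ← Matrix.transpose_smul, Matrix.exp_transpose]

lemma mexp_entry_decay {n : ℕ} (A : Matrix (Fin n) (Fin n) ℝ)
    (hA : ∀ μ ∈ spectrum ℂ (A.map Complex.ofReal), μ.re < 0) :
    ∃ C ε : ℝ, 0 < C ∧ 0 < ε ∧ ∀ t : ℝ, 0 ≤ t → ∀ i j,
      |mexp (t • A) i j| ≤ C * Real.exp (-ε * t) := by
  obtain ⟨C, ε, hC, hε, hb⟩ := hurwitz_decay A hA
  refine ⟨C, ε, hC, hε, fun t ht i j => ?_⟩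
  have h1 : |mexp (t • A) i j| = ‖((mexp (t • A)).map Complex.ofReal) i j‖ := by
    simp [Matrix.map_apply, Complex.norm_real, Real.norm_eq_abs]
  rw [h1, mexp_map, map_smul_ofReal]
  exact le_trans (entry_norm_le _ i j) (hb t ht)

lemma prod_entry_bound {n : ℕ} (A : Matrix (Fin n) (Fin n) ℝ)
    (hA : ∀ μ ∈ spectrum ℂ (A.map Complex.ofReal), μ.re < 0)
    (K : Matrix (Fin n) (Fin n) ℝ) :
    ∃ D ε : ℝ, 0 < D ∧ 0 < ε ∧ ∀ t : ℝ, 0 ≤ t → ∀ i j,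
      |(mexp (t • A) * K * mexp (t • Aᵀ)) i j| ≤ D * Real.exp (-ε * t) := by
  obtain ⟨C, ε, hC, hε, hb⟩ := mexp_entry_decay A hA
  set S : ℝ := (∑ l, ∑ k, |K k l|) + 1 with hS
  have hS0 : 0 < S := by positivity
  refine ⟨C ^ 2 * S, 2 * ε, by positivity, by positivity, fun t ht i j => ?_⟩
  set F := mexp (t • A) with hF
  set e := Real.exp (-ε * t) with he
  have he0 : 0 < e := Real.exp_pos _
  have hFb : ∀ i k, |F i k| ≤ C * e := fun i k => hb t ht i k
  have hentry : (F * K * mexp (t • Aᵀ)) i j = ∑ l, (∑ k, F i k * K k l) * F j l := by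
    rw [mexp_transpose]
    simp [Matrix.mul_apply, Matrix.transpose_apply]
    rfl
  rw [hentry]
  have h1 : ∀ l : Fin n, |(∑ k, F i k * K k l) * F j l| ≤ (∑ k, (C * e) * |K k l|) * (C * e) := by
    intro l
    rw [abs_mul]
    apply mul_le_mul ?_ (hFb j l) (abs_nonneg _) (by positivity)
    refine (Finset.abs_sum_le_sum_abs _ _).trans ?_
    apply Finset.sum_le_sum
    intro k _
    rw [abs_mul]
    exact mul_le_mul_of_nonneg_right (hFb i k) (abs_nonneg _)
  calc |∑ l, (∑ k, F i k * K k l) * F j l| ≤ ∑ l, |(∑ k, F i k * K k l) * F j l| :=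
        Finset.abs_sum_le_sum_abs _ _
    _ ≤ ∑ l, (∑ k, (C * e) * |K k l|) * (C * e) := Finset.sum_le_sum fun l _ => h1 l
    _ = (C * e) ^ 2 * (∑ l, ∑ k, |K k l|) := by
        simp_rw [← Finset.sum_mul, ← Finset.mul_sum]
        ring
    _ ≤ (C * e) ^ 2 * S := by
        apply mul_le_mul_of_nonneg_left _ (by positivity)
        rw [hS]; linarith
    _ = C ^ 2 * S * Real.exp (-(2 * ε) * t) := by
        have h2 : Real.exp (-(2 * ε) * t) = Real.exp (-ε * t) * Real.exp (-ε * t) := by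
          rw [← Real.exp_add]; ring_nf
        rw [he, h2]; ring

lemma prod_entry_continuous {n : ℕ} (A K : Matrix (Fin n) (Fin n) ℝ) (i j : Fin n) :
    Continuous fun t : ℝ => (mexp (t • A) * K * mexp (t • Aᵀ)) i j := by
  have h1 : Continuous fun t : ℝ => mexp (t • A) :=
    exp_continuous.comp (continuous_id.smul continuous_const)
  have h2 : Continuous fun t : ℝ => mexp (t • Aᵀ) :=
    exp_continuous.comp (continuous_id.smul continuous_const)
  have h3 : Continuous fun t : ℝ => mexp (t • A) * K * mexp (t • Aᵀ) :=
    (h1.mul continuous_const).mul h2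
  exact ((continuous_apply j).comp ((continuous_apply i).comp h3))

lemma prod_entry_integrableOn {n : ℕ} (A : Matrix (Fin n) (Fin n) ℝ)
    (hA : ∀ μ ∈ spectrum ℂ (A.map Complex.ofReal), μ.re < 0)
    (K : Matrix (Fin n) (Fin n) ℝ) (i j : Fin n) :
    IntegrableOn (fun t : ℝ => (mexp (t • A) * K * mexp (t • Aᵀ)) i j) (Set.Ioi 0) := by
  obtain ⟨D, ε, hD, hε, hb⟩ := prod_entry_bound A hA K
  apply MeasureTheory.Integrable.mono'
    (g := fun t : ℝ => D * Real.exp (-ε * t))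
    ((exp_neg_integrableOn_Ioi 0 hε).const_mul D)
    ((prod_entry_continuous A K i j).aestronglyMeasurable.restrict)
  filter_upwards [MeasureTheory.ae_restrict_mem measurableSet_Ioi] with t ht
  exact (by simpa using hb t (le_of_lt ht) i j)

lemma prod_entry_tendsto {n : ℕ} (A : Matrix (Fin n) (Fin n) ℝ)
    (hA : ∀ μ ∈ spectrum ℂ (A.map Complex.ofReal), μ.re < 0)
    (K : Matrix (Fin n) (Fin n) ℝ) (i j : Fin n) :
    Filter.Tendsto (fun t : ℝ => (mexp (t • A) * K * mexp (t • Aᵀ)) i j)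
      Filter.atTop (nhds 0) := by
  obtain ⟨D, ε, hD, hε, hb⟩ := prod_entry_bound A hA K
  have h2 : Filter.Tendsto (fun t : ℝ => -ε * t) Filter.atTop Filter.atBot :=
    Filter.Tendsto.const_mul_atTop_of_neg (neg_lt_zero.mpr hε) Filter.tendsto_id
  have h3 := Real.tendsto_exp_atBot.comp h2
  have h4 := h3.const_mul D
  rw [mul_zero] at h4
  apply squeeze_zero_norm' ?_ h4
  filter_upwards [Filter.eventually_ge_atTop (0:ℝ)] with t ht
  simpa using hb t ht i j

lemma theta_integral {n m : ℕ} (A : Matrix (Fin n) (Fin n) ℝ) (B : Matrix (Fin n) (Fin m) ℝ)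
    (Θ : Matrix (Fin n) (Fin n) ℝ) (J : Matrix (Fin m) (Fin m) ℝ)
    (hPR : A * Θ + Θ * Aᵀ + B * J * Bᵀ = 0)
    (hA : ∀ μ ∈ spectrum ℂ (A.map Complex.ofReal), μ.re < 0) (i j : Fin n) :
    Θ i j = ∫ t in Set.Ioi (0:ℝ), (mexp (t • A) * (B * J * Bᵀ) * mexp (t • Aᵀ)) i j := by
  have hPR' : A * Θ + Θ * Aᵀ = -(B * J * Bᵀ) := eq_neg_of_add_eq_zero_left hPR
  have hXT : ∀ t : ℝ, Commute (mexp (t • Aᵀ)) Aᵀ :=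
    fun t => ((Commute.refl Aᵀ).smul_left t).exp_left
  have hG : ∀ t : ℝ, HasDerivAt (fun u : ℝ => mexp (u • A) * Θ * mexp (u • Aᵀ))
      (-(mexp (t • A) * (B * J * Bᵀ) * mexp (t • Aᵀ))) t := by
    intro t
    have h1 : HasDerivAt (fun u : ℝ => mexp (u • A)) (mexp (t • A) * A) t :=
      hasDerivAt_exp_smul_const (𝕂 := ℝ) A t
    have h2 : HasDerivAt (fun u : ℝ => mexp (u • Aᵀ)) (mexp (t • Aᵀ) * Aᵀ) t :=
      hasDerivAt_exp_smul_const (𝕂 := ℝ) Aᵀ t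
    have h3 := (h1.mul_const Θ).mul h2
    refine HasDerivAt.congr_deriv h3 ?_
    symm
    rw [(hXT t).eq]
    set X := mexp (t • A)
    set Y := mexp (t • Aᵀ)
    calc -(X * (B * J * Bᵀ) * Y) = X * (-(B * J * Bᵀ)) * Y := by noncomm_ring
      _ = X * (A * Θ + Θ * Aᵀ) * Y := by rw [hPR']
      _ = X * A * Θ * Y + X * Θ * (Aᵀ * Y) := by noncomm_ring
  have hGentry : ∀ t : ℝ, HasDerivAt (fun u : ℝ => (mexp (u • A) * Θ * mexp (u • Aᵀ)) i j)
      (-((mexp (t • A) * (B * J * Bᵀ) * mexp (t • Aᵀ)) i j)) t := by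
    intro t
    let π : Matrix (Fin n) (Fin n) ℝ →L[ℝ] ℝ :=
      (ContinuousLinearMap.proj (R := ℝ) (φ := fun _ : Fin n => ℝ) j).comp
        (ContinuousLinearMap.proj (R := ℝ) (φ := fun _ : Fin n => Fin n → ℝ) i)
    have := π.hasFDerivAt.comp_hasDerivAt t (hG t)
    exact this
  have hint : IntegrableOn
      (fun t : ℝ => -((mexp (t • A) * (B * J * Bᵀ) * mexp (t • Aᵀ)) i j)) (Set.Ioi 0) :=
    (prod_entry_integrableOn A hA (B * J * Bᵀ) i j).neg
  have htend : Filter.Tendsto (fun t : ℝ => (mexp (t • A) * Θ * mexp (t • Aᵀ)) i j)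
      Filter.atTop (nhds 0) := prod_entry_tendsto A hA Θ i j
  have hftc := MeasureTheory.integral_Ioi_of_hasDerivAt_of_tendsto'
    (f := fun u : ℝ => (mexp (u • A) * Θ * mexp (u • Aᵀ)) i j)
    (f' := fun t : ℝ => -((mexp (t • A) * (B * J * Bᵀ) * mexp (t • Aᵀ)) i j))
    (fun x _ => hGentry x) hint htend
  rw [MeasureTheory.integral_neg] at hftc
  have h0 : (fun u : ℝ => (mexp (u • A) * Θ * mexp (u • Aᵀ)) i j) 0 = Θ i j := by
    simp only [zero_smul, mexp, NormedSpace.exp_zero, one_mul, mul_one]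
  rw [show (mexp ((0:ℝ) • A) * Θ * mexp ((0:ℝ) • Aᵀ)) i j = Θ i j from h0, zero_sub] at hftc
  exact (neg_injective hftc).symm

lemma map_mul_ofReal {a b c : ℕ} (X : Matrix (Fin a) (Fin b) ℝ) (Y : Matrix (Fin b) (Fin c) ℝ) :
    (X * Y).map Complex.ofReal = X.map Complex.ofReal * Y.map Complex.ofReal := by
  ext i j
  simp [Matrix.mul_apply, Matrix.map_apply]

theorem stmt0 {n m : ℕ} (A : Matrix (Fin n) (Fin n) ℝ) (B : Matrix (Fin n) (Fin m) ℝ)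
    (Θ : Matrix (Fin n) (Fin n) ℝ) (J : Matrix (Fin m) (Fin m) ℝ)
    (hΘ : Θᵀ = -Θ) (hJ : Jᵀ = -J)
    (hPR : A * Θ + Θ * Aᵀ + B * J * Bᵀ = 0)
    (hA : Hurwitz A)
    (hΩ : ((1 : Matrix (Fin m) (Fin m) ℂ) + Complex.I • J.map Complex.ofReal).PosSemidef)
    (P : Matrix (Fin n) (Fin n) ℝ)
    (hP : P = Matrix.of fun i j =>
      ∫ t in Set.Ioi (0:ℝ), (mexp (t • A) * B * Bᵀ * mexp (t • Aᵀ)) i j) :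
    (P.map Complex.ofReal + Complex.I • Θ.map Complex.ofReal).PosSemidef := by
  have hA' : ∀ μ ∈ spectrum ℂ (A.map Complex.ofReal), μ.re < 0 := hA
  set S1 : ℝ → Matrix (Fin n) (Fin n) ℝ :=
    fun t => mexp (t • A) * (B * Bᵀ) * mexp (t • Aᵀ) with hS1
  set S2 : ℝ → Matrix (Fin n) (Fin n) ℝ :=
    fun t => mexp (t • A) * (B * J * Bᵀ) * mexp (t • Aᵀ) with hS2
  have hPentry : ∀ i j, P i j = ∫ t in Set.Ioi (0:ℝ), S1 t i j := by
    intro i j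
    rw [hP]
    simp only [Matrix.of_apply, hS1]
    congr 1
    funext t
    rw [Matrix.mul_assoc (mexp (t • A)) B Bᵀ]
  have hΘentry : ∀ i j, Θ i j = ∫ t in Set.Ioi (0:ℝ), S2 t i j :=
    fun i j => theta_integral A B Θ J hPR hA' i j
  -- symmetry of S1 and P
  have hS1symm : ∀ t, (S1 t)ᵀ = S1 t := by
    intro t
    rw [hS1]
    simp only
    rw [mexp_transpose]
    simp [Matrix.transpose_mul, Matrix.mul_assoc]
  have hPsymm : ∀ i j, P j i = P i j := by
    intro i j
    rw [hPentry i j, hPentry j i]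
    congr 1
    funext t
    conv_lhs => rw [← hS1symm t]
    rw [Matrix.transpose_apply]
  -- integrability
  have hint1 : ∀ i j, IntegrableOn (fun t : ℝ => S1 t i j) (Set.Ioi (0:ℝ)) := by
    intro i j
    have := prod_entry_integrableOn A hA' (B * Bᵀ) i j
    simpa [hS1] using this
  have hint2 : ∀ i j, IntegrableOn (fun t : ℝ => S2 t i j) (Set.Ioi (0:ℝ)) := by
    intro i j
    have := prod_entry_integrableOn A hA' (B * J * Bᵀ) i j
    simpa [hS2] using this
  -- complex-valued pieces
  set W : ℝ → Matrix (Fin n) (Fin n) ℂ :=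
    fun t => (S1 t).map Complex.ofReal + Complex.I • (S2 t).map Complex.ofReal with hWdef
  have hintW : ∀ i j, IntegrableOn (fun t : ℝ => W t i j) (Set.Ioi (0:ℝ)) := by
    intro i j
    have h1 := (hint1 i j).ofReal (𝕜 := ℂ)
    have h2 := ((hint2 i j).ofReal (𝕜 := ℂ)).const_mul Complex.I
    have := h1.add h2
    exact this
  have hentryW : ∀ i j, (P.map Complex.ofReal + Complex.I • Θ.map Complex.ofReal) i j
      = ∫ t in Set.Ioi (0:ℝ), W t i j := by
    intro i j
    have h1 := (hint1 i j).ofReal (𝕜 := ℂ)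
    have h2 := ((hint2 i j).ofReal (𝕜 := ℂ)).const_mul Complex.I
    have e0 : (fun t : ℝ => W t i j) = fun t : ℝ => ((S1 t i j : ℂ) + Complex.I * (S2 t i j : ℂ)) := by
      funext t
      simp [hWdef, Matrix.add_apply, Matrix.smul_apply, Matrix.map_apply, smul_eq_mul]
    symm
    calc (∫ t in Set.Ioi (0:ℝ), W t i j)
        = ∫ t in Set.Ioi (0:ℝ), ((S1 t i j : ℂ) + Complex.I * (S2 t i j : ℂ)) := by rw [e0]
      _ = (∫ t in Set.Ioi (0:ℝ), ((S1 t i j : ℂ)))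
          + ∫ t in Set.Ioi (0:ℝ), Complex.I * (S2 t i j : ℂ) :=
          MeasureTheory.integral_add h1 h2
      _ = (∫ t in Set.Ioi (0:ℝ), ((S1 t i j : ℂ)))
          + Complex.I * ∫ t in Set.Ioi (0:ℝ), ((S2 t i j : ℂ)) := by
          rw [MeasureTheory.integral_const_mul]
      _ = (((∫ t in Set.Ioi (0:ℝ), S1 t i j : ℝ)) : ℂ)
          + Complex.I * (((∫ t in Set.Ioi (0:ℝ), S2 t i j : ℝ)) : ℂ) := by
          have i1 : ∫ t in Set.Ioi (0:ℝ), ((S1 t i j : ℝ) : ℂ)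
              = ((∫ t in Set.Ioi (0:ℝ), S1 t i j : ℝ) : ℂ) := integral_ofReal
          have i2 : ∫ t in Set.Ioi (0:ℝ), ((S2 t i j : ℝ) : ℂ)
              = ((∫ t in Set.Ioi (0:ℝ), S2 t i j : ℝ) : ℂ) := integral_ofReal
          rw [i1, i2]
      _ = (P.map Complex.ofReal + Complex.I • Θ.map Complex.ofReal) i j := by
          rw [← hPentry, ← hΘentry]
          simp [Matrix.add_apply, Matrix.smul_apply, Matrix.map_apply, smul_eq_mul]
  -- N and Ω
  set N : ℝ → Matrix (Fin m) (Fin n) ℂ :=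
    fun t => ((mexp (t • A) * B)ᵀ).map Complex.ofReal with hNdef
  set Ω : Matrix (Fin m) (Fin m) ℂ := 1 + Complex.I • J.map Complex.ofReal with hΩdef
  have hNH : ∀ t, (N t)ᴴ = (mexp (t • A) * B).map Complex.ofReal := by
    intro t
    ext i j
    simp only [hNdef, Matrix.conjTranspose_apply, Matrix.map_apply, Matrix.transpose_apply,
      Complex.star_def, Complex.conj_ofReal]
  have hWfact : ∀ t, (N t)ᴴ * Ω * N t = W t := by
    intro t
    rw [hNH t, hΩdef]
    rw [Matrix.mul_add, Matrix.mul_one, Matrix.add_mul]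
    have e1 : (mexp (t • A) * B).map Complex.ofReal * N t = (S1 t).map Complex.ofReal := by
      rw [hNdef]
      simp only
      rw [← map_mul_ofReal]
      congr 1
      rw [Matrix.transpose_mul, ← mexp_transpose, hS1]
      simp [Matrix.mul_assoc]
    have e2 : (mexp (t • A) * B).map Complex.ofReal * (Complex.I • J.map Complex.ofReal) * N t
        = Complex.I • (S2 t).map Complex.ofReal := by
      rw [Matrix.mul_smul, Matrix.smul_mul]
      congr 1
      rw [hNdef]
      simp only
      rw [← map_mul_ofReal, ← map_mul_ofReal]
      congr 1
      rw [Matrix.transpose_mul, ← mexp_transpose, hS2]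
      simp [Matrix.mul_assoc]
    rw [e1, e2, hWdef]
  -- positivity of W t
  have hWpos : ∀ t, (W t).PosSemidef := by
    intro t
    rw [← hWfact t]
    exact hΩ.conjTranspose_mul_mul_same (N t)
  refine posSemidef_iff_dotProduct_mulVec.mpr ⟨?_, ?_⟩
  · -- Hermitian
    show (P.map Complex.ofReal + Complex.I • Θ.map Complex.ofReal)ᴴ = _
    rw [Matrix.conjTranspose_add]
    congr 1
    · ext i j
      simp only [Matrix.conjTranspose_apply, Matrix.map_apply, Complex.star_def,
        Complex.conj_ofReal]
      exact congrArg _ (hPsymm i j)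
    · ext i j
      have hθ : Θ j i = -Θ i j := by
        have := congrFun (congrFun hΘ i) j
        simpa [Matrix.transpose_apply, Matrix.neg_apply] using this
      simp only [Matrix.conjTranspose_apply, Matrix.smul_apply, Matrix.map_apply, smul_eq_mul,
        star_mul', Complex.star_def, Complex.conj_I, Complex.conj_ofReal, hθ]
      push_cast
      ring
  · -- quadratic form
    intro x
    set Mtot := P.map Complex.ofReal + Complex.I • Θ.map Complex.ofReal with hMtot
    have expand : star x ⬝ᵥ (Mtot *ᵥ x) = ∑ i, ∑ j, (star (x i) * x j) * Mtot i j := by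
      simp only [dotProduct, Matrix.mulVec, Pi.star_apply, Finset.mul_sum]
      exact Finset.sum_congr rfl fun i _ => Finset.sum_congr rfl fun j _ => by ring
    have expand2 : ∀ t, star x ⬝ᵥ (W t *ᵥ x) = ∑ i, ∑ j, (star (x i) * x j) * W t i j := by
      intro t
      simp only [dotProduct, Matrix.mulVec, Pi.star_apply, Finset.mul_sum]
      exact Finset.sum_congr rfl fun i _ => Finset.sum_congr rfl fun j _ => by ring
    have key : star x ⬝ᵥ (Mtot *ᵥ x) = ∫ t in Set.Ioi (0:ℝ), star x ⬝ᵥ (W t *ᵥ x) := by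
      rw [expand]
      have swap : ∫ t in Set.Ioi (0:ℝ), star x ⬝ᵥ (W t *ᵥ x)
          = ∑ i, ∑ j, (star (x i) * x j) * ∫ t in Set.Ioi (0:ℝ), W t i j := by
        calc ∫ t in Set.Ioi (0:ℝ), star x ⬝ᵥ (W t *ᵥ x)
            = ∫ t in Set.Ioi (0:ℝ), ∑ i, ∑ j, (star (x i) * x j) * W t i j := by
              congr 1; funext t; exact expand2 t
          _ = ∑ i, ∫ t in Set.Ioi (0:ℝ), ∑ j, (star (x i) * x j) * W t i j := by
              rw [MeasureTheory.integral_finset_sum]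
              exact fun i _ => integrable_finset_sum _ (fun j _ => (hintW i j).const_mul _)
          _ = ∑ i, ∑ j, ∫ t in Set.Ioi (0:ℝ), (star (x i) * x j) * W t i j := by
              refine Finset.sum_congr rfl fun i _ => ?_
              rw [MeasureTheory.integral_finset_sum]
              exact fun j _ => (hintW i j).const_mul _
          _ = ∑ i, ∑ j, (star (x i) * x j) * ∫ t in Set.Ioi (0:ℝ), W t i j := by
              refine Finset.sum_congr rfl fun i _ => Finset.sum_congr rfl fun j _ => ?_
              rw [MeasureTheory.integral_const_mul]
      rw [swap]
      exact Finset.sum_congr rfl fun i _ => Finset.sum_congr rfl fun j _ => by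
        rw [hentryW i j]
    have hq : ∀ t, (0:ℂ) ≤ star x ⬝ᵥ (W t *ᵥ x) := fun t => (hWpos t).dotProduct_mulVec_nonneg x
    have hre : ∀ t, star x ⬝ᵥ (W t *ᵥ x) = (((star x ⬝ᵥ (W t *ᵥ x)).re : ℝ) : ℂ) := by
      intro t
      refine Complex.ext (by simp) ?_
      simpa using (Complex.nonneg_iff.mp (hq t)).2.symm
    have hofReal : star x ⬝ᵥ (Mtot *ᵥ x)
        = ((∫ t in Set.Ioi (0:ℝ), (star x ⬝ᵥ (W t *ᵥ x)).re : ℝ) : ℂ) := by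
      rw [key]
      have e1 : (fun t : ℝ => star x ⬝ᵥ (W t *ᵥ x))
          = fun t : ℝ => (((star x ⬝ᵥ (W t *ᵥ x)).re : ℝ) : ℂ) := funext hre
      rw [e1]
      exact integral_ofReal
    rw [hofReal]
    exact Complex.zero_le_real.mpr (MeasureTheory.setIntegral_nonneg measurableSet_Ioi
      (fun t _ => (Complex.nonneg_iff.mp (hq t)).1))
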